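/- Let q ≥ 3 be an odd number and b ∈ {−1,1}. Then Σ_{m≥2} (1/m)·Σ_{r=α(m)}^{β(m)} 1/(rq + b) ≤ (1/q)·(43/13 − (18/13)ζ(3)) + C/q² for some absolute constant C > 0, where α(m) = m(m−1)/2 and β(m) = m(m+1)/2 − 1. -/

import Mathlib

open Filter Topology Finset

lemma hasSum_telescope' (f : ℕ → ℝ) (hd : ∀ n, f (n + 1) ≤ f n)
    (hl : Tendsto f atTop (nhds 0)) :
    HasSum (fun n => f n - f (n + 1)) (f 0) := by
  have hnn : ∀ n, 0 ≤ f n - f (n + 1) := fun n => sub_nonneg.2 (hd n)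
  rw [hasSum_iff_tendsto_nat_of_nonneg hnn]
  have h : ∀ n : ℕ, ∑ i ∈ Finset.range n, (f i - f (i + 1)) = f 0 - f n :=
    fun n => Finset.sum_range_sub' f n
  simpa [h] using tendsto_const_nhds.sub hl

lemma tendsto_c_div (c k : ℝ) : Tendsto (fun n : ℕ => c / ((n : ℝ) + k)) atTop (nhds 0) :=
  tendsto_const_nhds.div_atTop (tendsto_atTop_add_const_right _ _ tendsto_natCast_atTop_atTop)

lemma hasSum_shift_inv (c k : ℝ) (hc : 0 < c) (hk : 0 < k) :
    HasSum (fun n : ℕ => c / ((n : ℝ) + k) - c / ((n : ℝ) + k + 1)) (c / k) := by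
  have h := hasSum_telescope' (fun n : ℕ => c / ((n : ℝ) + k))
    (fun n => by
      show c / (((n + 1 : ℕ) : ℝ) + k) ≤ c / ((n : ℝ) + k)
      gcongr
      push_cast; linarith) (tendsto_c_div c k)
  have e : ∀ n : ℕ, c / ((n : ℝ) + k) - c / (((n + 1 : ℕ) : ℝ) + k) =
      c / ((n : ℝ) + k) - c / ((n : ℝ) + k + 1) := by
    intro n; push_cast; ring_nf
  simp only [e] at h
  simpa using h

lemma hasSum_shift_inv2 :
    HasSum (fun n : ℕ => (1 : ℝ) / 2 / (((n : ℝ) + 3) * ((n : ℝ) + 4)) -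
      (1 : ℝ) / 2 / (((n : ℝ) + 4) * ((n : ℝ) + 5))) (1 / 24) := by
  have h := hasSum_telescope' (fun n : ℕ => (1 : ℝ) / 2 / (((n : ℝ) + 3) * ((n : ℝ) + 4)))
    (fun n => by
      show (1:ℝ)/2 / ((((n+1:ℕ):ℝ) + 3) * (((n+1:ℕ):ℝ) + 4)) ≤
        (1:ℝ)/2 / (((n : ℝ) + 3) * ((n : ℝ) + 4))
      gcongr <;> (push_cast; nlinarith [Nat.cast_nonneg (α := ℝ) n]))
    (squeeze_zero (fun n => by positivity)
      (fun n => by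
        show (1:ℝ)/2 / (((n : ℝ) + 3) * ((n : ℝ) + 4)) ≤ (1:ℝ)/2 / ((n:ℝ) + 3)
        gcongr <;> nlinarith [Nat.cast_nonneg (α := ℝ) n])
      (tendsto_c_div (1/2) 3))
  have e : ∀ n : ℕ, (1:ℝ)/2 / (((n : ℝ) + 3) * ((n : ℝ) + 4)) -
      (1:ℝ)/2 / ((((n+1:ℕ):ℝ) + 3) * (((n+1:ℕ):ℝ) + 4)) =
      (1:ℝ)/2 / (((n : ℝ) + 3) * ((n : ℝ) + 4)) - (1:ℝ)/2 / (((n : ℝ) + 4) * ((n : ℝ) + 5)) := by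
    intro n; push_cast; ring_nf
  simp only [e] at h
  norm_num at h
  convert h using 2 <;> norm_num

/-- Upper bound on `ζ(3)`. -/
lemma zeta3_upper : ∑' n : ℕ, 1 / ((n : ℝ) + 1) ^ 3 ≤ 65 / 54 := by
  have hZs : Summable (fun n : ℕ => 1 / ((n : ℝ) + 1) ^ 3) := by
    have h := Real.summable_one_div_nat_pow.mpr (by norm_num : (1:ℕ) < 3)
    exact ((summable_nat_add_iff 1).mpr h).congr (fun n => by push_cast; ring)
  rw [← Summable.sum_add_tsum_nat_add 3 hZs]
  have hhead : ∑ i ∈ Finset.range 3, 1 / ((i : ℝ) + 1) ^ 3 = 251 / 216 := by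
    rw [Finset.sum_range_succ, Finset.sum_range_succ, Finset.sum_range_one]; norm_num
  have htail : ∑' n : ℕ, 1 / (((n + 3 : ℕ) : ℝ) + 1) ^ 3 ≤ 1 / 24 := by
    have hle : ∀ n : ℕ, 1 / (((n + 3 : ℕ) : ℝ) + 1) ^ 3 ≤
        (1 : ℝ) / 2 / (((n : ℝ) + 3) * ((n : ℝ) + 4)) -
          (1 : ℝ) / 2 / (((n : ℝ) + 4) * ((n : ℝ) + 5)) := by
      intro n
      have hn : (0:ℝ) ≤ (n : ℝ) := Nat.cast_nonneg n
      have e : (1 : ℝ) / 2 / (((n : ℝ) + 3) * ((n : ℝ) + 4)) -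
          (1 : ℝ) / 2 / (((n : ℝ) + 4) * ((n : ℝ) + 5)) =
          1 / ((((n : ℝ) + 3) * ((n : ℝ) + 4)) * ((n : ℝ) + 5)) := by
        have h3 : (0:ℝ) < (n:ℝ) + 3 := by linarith
        have h4 : (0:ℝ) < (n:ℝ) + 4 := by linarith
        have h5 : (0:ℝ) < (n:ℝ) + 5 := by linarith
        field_simp
        ring
      rw [e]
      have hc : (((n + 3 : ℕ) : ℝ) + 1) = (n : ℝ) + 4 := by push_cast; ring
      rw [hc]
      apply one_div_le_one_div_of_le (by positivity)
      nlinarith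
    have hs3 : Summable (fun n : ℕ => 1 / (((n + 3 : ℕ) : ℝ) + 1) ^ 3) :=
      Summable.of_nonneg_of_le (fun n => by positivity) hle hasSum_shift_inv2.summable
    have ht := Summable.tsum_le_tsum hle hs3 hasSum_shift_inv2.summable
    rw [hasSum_shift_inv2.tsum_eq] at ht
    exact ht
  rw [hhead]
  linarith

set_option maxHeartbeats 2000000 in
/-- There is an absolute constant `C > 0` such that for every odd `q ≥ 3` and
`b ∈ {−1,1}`, `Σ_{m≥2} (1/m)·Σ_{r=α(m)}^{β(m)} 1/(rq+b) ≤ (1/q)(43/13 − (18/13)ζ(3)) + C/q²`,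
where `α(m) = m(m−1)/2`, `β(m) = m(m+1)/2 − 1` and `ζ(3) = Σ_{n≥1} 1/n³`. -/
theorem double_sum_le_main_term :
    ∃ C : ℝ, 0 < C ∧ ∀ q : ℕ, 3 ≤ q → Odd q → ∀ b : ℤ, b = -1 ∨ b = 1 →
      ∑' m : ℕ, (1 / ((m : ℝ) + 2)) *
          ∑ r ∈ Finset.Icc ((m + 2) * (m + 1) / 2) ((m + 2) * (m + 3) / 2 - 1),
            1 / ((r : ℝ) * q + b) ≤
        (1 / (q : ℝ)) * (43 / 13 - (18 / 13) * ∑' n : ℕ, 1 / ((n : ℝ) + 1) ^ 3) +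
          C / (q : ℝ) ^ 2 := by
  refine ⟨6, by norm_num, ?_⟩
  intro q hq3 _ b hb
  have hQ : (3:ℝ) ≤ (q:ℝ) := by exact_mod_cast hq3
  have hQ0 : (0:ℝ) < (q:ℝ) := by linarith
  have hB : (-1:ℝ) ≤ (b:ℝ) := by rcases hb with h | h <;> simp [h]
  -- index facts
  have ha1 : ∀ m : ℕ, 1 ≤ (m+2)*(m+1)/2 := by
    intro m; rw [Nat.le_div_iff_mul_le (by norm_num)]; nlinarith
  have hβ : ∀ m : ℕ, (m+2)*(m+3)/2 - 1 = (m+2)*(m+1)/2 + (m+1) := by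
    intro m
    have h1 : (m+2)*(m+3) = (m+2)*(m+1) + (m+2)*2 := by ring
    have h2 : (m+2)*(m+3)/2 = (m+2)*(m+1)/2 + (m+2) := by
      rw [h1, Nat.add_mul_div_right _ _ (by norm_num : 0 < 2)]
    omega
  have h2a : ∀ m : ℕ, ((m+2)*(m+1)/2) * 2 = (m+2)*(m+1) := by
    intro m
    refine Nat.div_mul_cancel ?_
    have h := Nat.even_mul_succ_self (m+1)
    have : Even ((m+2)*(m+1)) := by rwa [mul_comm] at h
    exact this.two_dvd
  have haR : ∀ m : ℕ, (((m+2)*(m+1)/2 : ℕ) : ℝ) * 2 = ((m:ℝ)+2)*((m:ℝ)+1) := by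
    intro m; exact_mod_cast congrArg (Nat.cast : ℕ → ℝ) (h2a m)
  have haRpos : ∀ m : ℕ, (0:ℝ) < (((m+2)*(m+1)/2 : ℕ) : ℝ) := by
    intro m
    have : (1:ℝ) ≤ (((m+2)*(m+1)/2 : ℕ) : ℝ) := by exact_mod_cast ha1 m
    linarith
  -- abbreviations
  set u : ℕ → ℝ := fun m => (1 / ((m : ℝ) + 2)) *
      ∑ r ∈ Finset.Icc ((m + 2) * (m + 1) / 2) ((m + 2) * (m + 3) / 2 - 1), 1 / (r : ℝ)
    with hu
  set v : ℕ → ℝ := fun m => (1 / ((m : ℝ) + 2)) *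
      ∑ r ∈ Finset.Icc ((m + 2) * (m + 1) / 2) ((m + 2) * (m + 3) / 2 - 1), 1 / (r : ℝ) ^ 2
    with hv
  set F : ℕ → ℝ := fun m => (1 / ((m : ℝ) + 2)) *
      ∑ r ∈ Finset.Icc ((m + 2) * (m + 1) / 2) ((m + 2) * (m + 3) / 2 - 1),
        1 / ((r : ℝ) * q + b)
    with hF
  -- pointwise key bound
  have key : ∀ r : ℕ, 1 ≤ r →
      1 / ((r : ℝ) * q + b) ≤ (1/(q:ℝ)) * (1/(r:ℝ)) + 3/(2*(q:ℝ)^2) * (1/(r:ℝ)^2) := by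
    intro r hr
    have hr1 : (1:ℝ) ≤ (r:ℝ) := by exact_mod_cast hr
    have h3 : (3:ℝ) ≤ (r:ℝ) * q := by nlinarith
    have hpos : (0:ℝ) < (r:ℝ) * q - 1 := by linarith
    have step1 : 1 / ((r : ℝ) * q + b) ≤ 1 / ((r:ℝ) * q - 1) :=
      one_div_le_one_div_of_le hpos (by linarith)
    refine step1.trans ?_
    have he : (1/(q:ℝ)) * (1/(r:ℝ)) + 3/(2*(q:ℝ)^2) * (1/(r:ℝ)^2) =
        (2*(q:ℝ)*(r:ℝ) + 3) / (2*(q:ℝ)^2*(r:ℝ)^2) := by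
      field_simp
    rw [he, div_le_div_iff₀ hpos (by positivity)]
    nlinarith
  -- positivity of terms
  have hF0 : ∀ m, 0 ≤ F m := by
    intro m
    simp only [hF]
    apply mul_nonneg (by positivity)
    apply Finset.sum_nonneg
    intro r hr
    have hr1 : 1 ≤ r := le_trans (ha1 m) (Finset.mem_Icc.1 hr).1
    have hr1' : (1:ℝ) ≤ (r:ℝ) := by exact_mod_cast hr1
    have : (0:ℝ) < (r:ℝ) * q + b := by nlinarith
    positivity
  have hu0 : ∀ m, 0 ≤ u m := by intro m; simp only [hu]; positivity
  have hv0 : ∀ m, 0 ≤ v m := by intro m; simp only [hv]; positivity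
  -- termwise comparison
  have hF_le : ∀ m : ℕ, F m ≤ (1/(q:ℝ)) * u m + 3/(2*(q:ℝ)^2) * v m := by
    intro m
    have hsum : ∑ r ∈ Finset.Icc ((m + 2) * (m + 1) / 2) ((m + 2) * (m + 3) / 2 - 1),
          1 / ((r : ℝ) * q + b) ≤
        ∑ r ∈ Finset.Icc ((m + 2) * (m + 1) / 2) ((m + 2) * (m + 3) / 2 - 1),
          ((1/(q:ℝ)) * (1/(r:ℝ)) + 3/(2*(q:ℝ)^2) * (1/(r:ℝ)^2)) :=
      Finset.sum_le_sum (fun r hr => key r (le_trans (ha1 m) (Finset.mem_Icc.1 hr).1))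
    calc F m ≤ (1 / ((m : ℝ) + 2)) *
          ∑ r ∈ Finset.Icc ((m + 2) * (m + 1) / 2) ((m + 2) * (m + 3) / 2 - 1),
            ((1/(q:ℝ)) * (1/(r:ℝ)) + 3/(2*(q:ℝ)^2) * (1/(r:ℝ)^2)) := by
          simp only [hF]
          exact mul_le_mul_of_nonneg_left hsum (by positivity)
      _ = (1/(q:ℝ)) * u m + 3/(2*(q:ℝ)^2) * v m := by
          simp only [hu, hv]
          rw [Finset.sum_add_distrib, ← Finset.mul_sum, ← Finset.mul_sum]
          ring
  -- upper bounds for u and v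
  have hu_le : ∀ m : ℕ, u m ≤ 2 / (((m:ℝ)+1) * ((m:ℝ)+2)) := by
    intro m
    have hcard : (Finset.Icc ((m+2)*(m+1)/2) ((m+2)*(m+3)/2 - 1)).card = m + 2 := by
      rw [hβ m, Nat.card_Icc]; omega
    have hsum : ∑ r ∈ Finset.Icc ((m + 2) * (m + 1) / 2) ((m + 2) * (m + 3) / 2 - 1),
        1 / (r : ℝ) ≤ (m+2) • (1 / (((m+2)*(m+1)/2 : ℕ) : ℝ)) := by
      have := Finset.sum_le_card_nsmul
        (Finset.Icc ((m + 2) * (m + 1) / 2) ((m + 2) * (m + 3) / 2 - 1))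
        (fun r => 1 / (r : ℝ)) (1 / (((m+2)*(m+1)/2 : ℕ) : ℝ))
        (fun r hr => by
          have h1 : ((m+2)*(m+1)/2 : ℕ) ≤ r := (Finset.mem_Icc.1 hr).1
          have h1' : (((m+2)*(m+1)/2 : ℕ) : ℝ) ≤ (r:ℝ) := by exact_mod_cast h1
          exact one_div_le_one_div_of_le (haRpos m) h1')
      rwa [hcard] at this
    have step : u m ≤ (1 / ((m : ℝ) + 2)) * ((m+2) • (1 / (((m+2)*(m+1)/2 : ℕ) : ℝ))) := by
      simp only [hu]
      exact mul_le_mul_of_nonneg_left hsum (by positivity)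
    refine step.trans ?_
    rw [nsmul_eq_mul]
    push_cast
    have h2 := haR m
    have hp := haRpos m
    have e1 : 1/((m:ℝ)+2) * (((m:ℝ)+2) * (1 / (((m+2)*(m+1)/2 : ℕ) : ℝ))) =
        1 / (((m+2)*(m+1)/2 : ℕ) : ℝ) := by
      field_simp
    rw [e1, div_le_div_iff₀ hp (by positivity)]
    nlinarith
  have hv_le : ∀ m : ℕ, v m ≤ 4 / (((m:ℝ)+1) * ((m:ℝ)+2)) := by
    intro m
    have hcard : (Finset.Icc ((m+2)*(m+1)/2) ((m+2)*(m+3)/2 - 1)).card = m + 2 := by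
      rw [hβ m, Nat.card_Icc]; omega
    have hsum : ∑ r ∈ Finset.Icc ((m + 2) * (m + 1) / 2) ((m + 2) * (m + 3) / 2 - 1),
        1 / (r : ℝ) ^ 2 ≤ (m+2) • (1 / (((m+2)*(m+1)/2 : ℕ) : ℝ) ^ 2) := by
      have := Finset.sum_le_card_nsmul
        (Finset.Icc ((m + 2) * (m + 1) / 2) ((m + 2) * (m + 3) / 2 - 1))
        (fun r => 1 / (r : ℝ) ^ 2) (1 / (((m+2)*(m+1)/2 : ℕ) : ℝ) ^ 2)
        (fun r hr => by
          have h1 : ((m+2)*(m+1)/2 : ℕ) ≤ r := (Finset.mem_Icc.1 hr).1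
          have h1' : (((m+2)*(m+1)/2 : ℕ) : ℝ) ≤ (r:ℝ) := by exact_mod_cast h1
          have hp := haRpos m
          apply one_div_le_one_div_of_le (by positivity)
          nlinarith)
      rwa [hcard] at this
    have step : v m ≤ (1 / ((m : ℝ) + 2)) * ((m+2) • (1 / (((m+2)*(m+1)/2 : ℕ) : ℝ) ^ 2)) := by
      simp only [hv]
      exact mul_le_mul_of_nonneg_left hsum (by positivity)
    refine step.trans ?_
    rw [nsmul_eq_mul]
    push_cast
    have h2 := haR m
    have hp := haRpos m
    have hm0 : (0:ℝ) ≤ (m:ℝ) := Nat.cast_nonneg m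
    have e1 : 1/((m:ℝ)+2) * (((m:ℝ)+2) * (1 / (((m+2)*(m+1)/2 : ℕ) : ℝ) ^ 2)) =
        1 / (((m+2)*(m+1)/2 : ℕ) : ℝ) ^ 2 := by
      field_simp
    rw [e1, div_le_div_iff₀ (by positivity) (by positivity)]
    have hP : (1:ℝ) ≤ ((m:ℝ)+1)*((m:ℝ)+2) := by nlinarith
    nlinarith [h2, hP]
  -- summable comparison series
  have hW : HasSum (fun m : ℕ => 2 / (((m:ℝ)+1) * ((m:ℝ)+2))) 2 := by
    have h := hasSum_shift_inv 2 1 (by norm_num) (by norm_num)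
    have e : ∀ n : ℕ, (2:ℝ)/((n:ℝ)+1) - 2/((n:ℝ)+1+1) = 2/(((n:ℝ)+1)*((n:ℝ)+2)) := by
      intro n
      have h1 : (0:ℝ) < (n:ℝ)+1 := by positivity
      have h2 : (0:ℝ) < (n:ℝ)+2 := by positivity
      field_simp
      ring
    simp only [e] at h
    norm_num at h
    exact h
  have hW4 : HasSum (fun m : ℕ => 4 / (((m:ℝ)+1) * ((m:ℝ)+2))) 4 := by
    have h := hW.mul_left 2
    have e : ∀ m : ℕ, (2:ℝ) * (2 / (((m:ℝ)+1) * ((m:ℝ)+2))) = 4 / (((m:ℝ)+1) * ((m:ℝ)+2)) := by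
      intro m; ring
    simp only [e] at h
    norm_num at h
    exact h
  have hu_sum : Summable u := Summable.of_nonneg_of_le hu0 hu_le hW.summable
  have hv_sum : Summable v := Summable.of_nonneg_of_le hv0 hv_le hW4.summable
  have hG_sum : Summable (fun m => (1/(q:ℝ)) * u m + 3/(2*(q:ℝ)^2) * v m) :=
    (hu_sum.mul_left _).add (hv_sum.mul_left _)
  have hF_sum : Summable F := Summable.of_nonneg_of_le hF0 hF_le hG_sum
  -- bound tsum u
  have hu_tail : ∑' n : ℕ, u (n + 4) ≤ 2/5 := by
    have hb5 := hasSum_shift_inv 2 5 (by norm_num) (by norm_num)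
    have hle : ∀ n : ℕ, u (n+4) ≤ 2/((n:ℝ)+5) - 2/((n:ℝ)+5+1) := by
      intro n
      refine (hu_le (n+4)).trans (le_of_eq ?_)
      have h5 : (0:ℝ) < (n:ℝ)+5 := by positivity
      have h6 : (0:ℝ) < (n:ℝ)+6 := by positivity
      push_cast
      field_simp
      ring
    have hs4 : Summable (fun n : ℕ => u (n + 4)) :=
      Summable.of_nonneg_of_le (fun n => hu0 (n + 4)) hle hb5.summable
    have ht := Summable.tsum_le_tsum hle hs4 hb5.summable
    rw [hb5.tsum_eq] at ht
    norm_num at ht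
    exact ht
  have eu0 : u 0 = 3/4 := by
    simp only [hu]
    norm_num
    rw [show Finset.Icc (1:ℕ) 2 = {1,2} by rfl]
    norm_num [Finset.sum_insert, Finset.mem_insert]
  have eu1 : u 1 = 47/180 := by
    simp only [hu]
    norm_num
    rw [show Finset.Icc (3:ℕ) 5 = {3,4,5} by rfl]
    norm_num [Finset.sum_insert, Finset.mem_insert]
  have eu2 : u 2 = 275/2016 := by
    simp only [hu]
    norm_num
    rw [show Finset.Icc (6:ℕ) 9 = {6,7,8,9} by rfl]
    norm_num [Finset.sum_insert, Finset.mem_insert]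
  have eu3 : u 3 = 25381/300300 := by
    simp only [hu]
    norm_num
    rw [show Finset.Icc (10:ℕ) 14 = {10,11,12,13,14} by rfl]
    norm_num [Finset.sum_insert, Finset.mem_insert]
  have hu_head : ∑ i ∈ Finset.range 4, u i = 1268507/1029600 := by
    rw [Finset.sum_range_succ, Finset.sum_range_succ, Finset.sum_range_succ,
      Finset.sum_range_one, eu0, eu1, eu2, eu3]
    norm_num
  have hu_tsum : ∑' m, u m ≤ 1680347/1029600 := by
    rw [← Summable.sum_add_tsum_nat_add 4 hu_sum, hu_head]
    linarith
  -- bound tsum v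
  have hv_tsum : ∑' m, v m ≤ 4 := by
    calc ∑' m, v m ≤ ∑' m : ℕ, 4 / (((m:ℝ)+1) * ((m:ℝ)+2)) :=
          Summable.tsum_le_tsum hv_le hv_sum hW4.summable
      _ = 4 := hW4.tsum_eq
  -- put it together
  have h1 : ∑' m, F m ≤ ∑' m, ((1/(q:ℝ)) * u m + 3/(2*(q:ℝ)^2) * v m) :=
    Summable.tsum_le_tsum hF_le hF_sum hG_sum
  have h2 : ∑' m, ((1/(q:ℝ)) * u m + 3/(2*(q:ℝ)^2) * v m) =
      (1/(q:ℝ)) * ∑' m, u m + 3/(2*(q:ℝ)^2) * ∑' m, v m := by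
    rw [Summable.tsum_add (hu_sum.mul_left _) (hv_sum.mul_left _), tsum_mul_left, tsum_mul_left]
  have hZ := zeta3_upper
  have hA : (1680347/1029600 : ℝ) ≤ 43/13 - 18/13 * ∑' n : ℕ, 1 / ((n : ℝ) + 1) ^ 3 := by
    have h65 : (18:ℝ)/13 * ∑' n : ℕ, 1 / ((n : ℝ) + 1) ^ 3 ≤ 18/13 * (65/54) :=
      mul_le_mul_of_nonneg_left hZ (by norm_num)
    have hc : (1680347/1029600 : ℝ) ≤ 43/13 - 18/13*(65/54) := by norm_num
    linarith
  calc ∑' m, F m ≤ (1/(q:ℝ)) * ∑' m, u m + 3/(2*(q:ℝ)^2) * ∑' m, v m := h1.trans (le_of_eq h2)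
    _ ≤ (1/(q:ℝ)) * (1680347/1029600) + 3/(2*(q:ℝ)^2) * 4 := by
        apply add_le_add
        · exact mul_le_mul_of_nonneg_left hu_tsum (by positivity)
        · exact mul_le_mul_of_nonneg_left hv_tsum (by positivity)
    _ ≤ (1 / (q : ℝ)) * (43 / 13 - (18 / 13) * ∑' n : ℕ, 1 / ((n : ℝ) + 1) ^ 3) +
          6 / (q : ℝ) ^ 2 := by
        have e : 3/(2*(q:ℝ)^2) * 4 = 6 / (q:ℝ)^2 := by ring
        rw [e]
        apply add_le_add ?_ le_rfl
        exact mul_le_mul_of_nonneg_left hA (by positivity)
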